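/- Let μ and ν be probability measures on a measurable space that are mutually absolutely continuous, and suppose the log density ratio ℓ := log(dν/dμ) is essentially bounded. Then for every bounded measurable function f, 4·d_TV(ν, μ)² ≤ KL(ν‖μ) + KL(μ‖ν) ≤ 2·ess sup|ℓ − f| + (∫ f dν − ∫ f dμ). -/

import Mathlib

open MeasureTheory


/-- `F s = (s+1) log s - 2(s-1)` is monotone on `(0, ∞)`. -/
lemma aux_F_mono : MonotoneOn (fun s : ℝ => (s + 1) * Real.log s - 2 * (s - 1))
    (Set.Ioi (0:ℝ)) := by
  set F : ℝ → ℝ := fun s => (s + 1) * Real.log s - 2 * (s - 1) with hF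
  have hderiv : ∀ s ∈ Set.Ioi (0:ℝ), HasDerivAt F (Real.log s + (s + 1) * s⁻¹ - 2) s := by
    intro s hs
    have hs0 : (0:ℝ) < s := hs
    have h1 : HasDerivAt (fun s : ℝ => (s + 1) * Real.log s)
        (1 * Real.log s + (s + 1) * s⁻¹) s :=
      ((hasDerivAt_id s).add_const 1).mul (Real.hasDerivAt_log hs0.ne')
    have h2 : HasDerivAt (fun s : ℝ => 2 * (s - 1)) 2 s := by
      simpa using ((hasDerivAt_id s).sub_const 1).const_mul 2
    have h3 := h1.sub h2
    have e : Real.log s + (s + 1) * s⁻¹ - 2 = 1 * Real.log s + (s + 1) * s⁻¹ - 2 := by ring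
    rw [e]
    exact h3
  have hcont : ContinuousOn F (Set.Ioi (0:ℝ)) := by
    apply ContinuousOn.sub
    · exact (continuousOn_id.add continuousOn_const).mul
        (Real.continuousOn_log.mono (by intro x hx; simp at hx ⊢; exact hx.ne'))
    · fun_prop
  refine monotoneOn_of_deriv_nonneg (convex_Ioi 0) hcont ?_ ?_
  · intro s hs
    rw [interior_Ioi] at hs
    exact (hderiv s hs).differentiableAt.differentiableWithinAt
  · intro s hs
    rw [interior_Ioi] at hs
    rw [(hderiv s hs).deriv]
    have hs0 : (0:ℝ) < s := hs
    have hlog : Real.log (1/s) ≤ 1/s - 1 := Real.log_le_sub_one_of_pos (by positivity)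
    rw [Real.log_div one_ne_zero hs0.ne', Real.log_one] at hlog
    have hinv : (s + 1) * s⁻¹ = 1 + 1/s := by field_simp
    rw [hinv]
    linarith

/-- Key pointwise inequality: for `t > 0`, `2(t-1)²/(t+1) ≤ (t-1) log t`. -/
lemma aux_key (t : ℝ) (ht : 0 < t) : 2 * (t - 1) ^ 2 / (t + 1) ≤ (t - 1) * Real.log t := by
  have htp : (0:ℝ) < t + 1 := by linarith
  rw [div_le_iff₀ htp]
  have h1 : (1:ℝ) ∈ Set.Ioi (0:ℝ) := by norm_num
  have ht' : t ∈ Set.Ioi (0:ℝ) := ht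
  rcases le_total 1 t with h | h
  · have := aux_F_mono h1 ht' h
    simp only [Real.log_one] at this
    nlinarith [this, sub_nonneg.2 h]
  · have := aux_F_mono ht' h1 h
    simp only [Real.log_one] at this
    nlinarith [this, sub_nonneg.2 h]

/-- Cauchy–Schwarz for real integrals. -/
lemma aux_cs {Ω : Type*} [MeasurableSpace Ω] {μ : Measure Ω} {u v : Ω → ℝ}
    (hu : Integrable (fun x => u x ^ 2) μ) (hv : Integrable (fun x => v x ^ 2) μ)
    (huv : Integrable (fun x => u x * v x) μ) :
    (∫ x, u x * v x ∂μ) ^ 2 ≤ (∫ x, u x ^ 2 ∂μ) * ∫ x, v x ^ 2 ∂μ := by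
  set a := ∫ x, u x ^ 2 ∂μ with ha'
  set b := ∫ x, u x * v x ∂μ with hb'
  set c := ∫ x, v x ^ 2 ∂μ with hc'
  have ha : 0 ≤ a := integral_nonneg fun x => sq_nonneg _
  have hc : 0 ≤ c := integral_nonneg fun x => sq_nonneg _
  have key : ∀ t : ℝ, 0 ≤ a - 2 * t * b + t ^ 2 * c := by
    intro t
    have hA : Integrable (fun x => u x ^ 2 - 2 * t * (u x * v x)) μ := hu.sub (huv.const_mul _)
    have hB : Integrable (fun x => t ^ 2 * v x ^ 2) μ := hv.const_mul _
    have h0 : 0 ≤ ∫ x, (u x - t * v x) ^ 2 ∂μ := integral_nonneg fun x => sq_nonneg _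
    have heq : ∫ x, (u x - t * v x) ^ 2 ∂μ = a - 2 * t * b + t ^ 2 * c := by
      have hfun : (fun x => (u x - t * v x) ^ 2)
          = fun x => (u x ^ 2 - 2 * t * (u x * v x)) + t ^ 2 * v x ^ 2 := by
        funext x; ring
      rw [hfun, integral_add hA hB, integral_sub hu (huv.const_mul _),
        integral_const_mul, integral_const_mul]
    linarith [heq ▸ h0]
  rcases eq_or_lt_of_le hc with hc0 | hc0
  · have hb : b = 0 := by
      by_contra hb
      have hkey := key ((a + 1) / (2 * b))
      rw [← hc0] at hkey
      have hmul : 2 * ((a + 1) / (2 * b)) * b = a + 1 := by field_simp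
      nlinarith [hkey, hmul]
    rw [hb, ← hc0]
    simp
  · have hkey := key (b / c)
    have h1 : (b / c) ^ 2 * c = b ^ 2 / c := by field_simp
    have h2 : 2 * (b / c) * b = 2 * (b ^ 2 / c) := by field_simp
    have h3 : b ^ 2 / c ≤ a := by nlinarith [hkey, h1, h2]
    calc b ^ 2 = b ^ 2 / c * c := by field_simp
    _ ≤ a * c := mul_le_mul_of_nonneg_right h3 hc0.le

/-- Integrability from an a.e. bound on a finite measure. -/
lemma aux_integrable {Ω : Type*} [MeasurableSpace Ω] {μ : Measure Ω} [IsFiniteMeasure μ]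
    {g : Ω → ℝ} (hg : AEStronglyMeasurable g μ) {K : ℝ} (h : ∀ᵐ x ∂μ, |g x| ≤ K) :
    Integrable g μ := by
  refine (integrable_const K).mono' hg ?_
  simpa [Real.norm_eq_abs] using h

/-- Total variation distance between two measures. -/
noncomputable def tvDist {Ω : Type*} [MeasurableSpace Ω] (P Q : Measure Ω) : ℝ :=
  ⨆ A : {A : Set Ω // MeasurableSet A}, |(P A.1).toReal - (Q A.1).toReal|

/-- Kullback-Leibler divergence KL(ν ‖ μ) = ∫ log (dν/dμ) dν. -/
noncomputable def klDivR {Ω : Type*} [MeasurableSpace Ω] (ν μ : Measure Ω) : ℝ :=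
  ∫ x, Real.log ((ν.rnDeriv μ) x).toReal ∂ν

/-- Symmetrized Pinsker inequality together with the discriminator-approximation
decomposition of the symmetrized KL divergence. -/
theorem pinsker_and_discriminator_decomposition {Ω : Type*} [MeasurableSpace Ω]
    (μ ν : Measure Ω) [IsProbabilityMeasure μ] [IsProbabilityMeasure ν]
    (hνμ : ν ≪ μ) (hμν : μ ≪ ν)
    (C : ℝ) (hbd : ∀ᵐ x ∂μ, |Real.log ((ν.rnDeriv μ) x).toReal| ≤ C)
    (f : Ω → ℝ) (hfm : Measurable f) (Bf : ℝ) (hfb : ∀ x, |f x| ≤ Bf) :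
    4 * tvDist ν μ ^ 2 ≤ klDivR ν μ + klDivR μ ν ∧
    klDivR ν μ + klDivR μ ν
      ≤ 2 * essSup (fun x => |Real.log ((ν.rnDeriv μ) x).toReal - f x|) μ
        + (∫ x, f x ∂ν - ∫ x, f x ∂μ) := by
  set ρ : Ω → ℝ := fun x => ((ν.rnDeriv μ) x).toReal with hρdef
  set ℓ : Ω → ℝ := fun x => Real.log (ρ x) with hℓdef
  have hρm : Measurable ρ := (Measure.measurable_rnDeriv ν μ).ennreal_toReal
  have hℓm : Measurable ℓ := Real.measurable_log.comp hρm
  have hC : 0 ≤ C := by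
    obtain ⟨x, hx⟩ := hbd.exists
    exact (abs_nonneg _).trans hx
  -- a.e. facts
  have hae : ∀ᵐ x ∂μ, Real.exp (-C) ≤ ρ x ∧ ρ x ≤ Real.exp C ∧ 0 < ρ x ∧ |ℓ x| ≤ C := by
    filter_upwards [hbd, Measure.rnDeriv_pos' hμν, Measure.rnDeriv_lt_top ν μ] with x h1 h2 h3
    have hpos : 0 < ρ x := ENNReal.toReal_pos h2.ne' h3.ne
    have hlog : |ℓ x| ≤ C := h1
    have hexp : ρ x = Real.exp (ℓ x) := (Real.exp_log hpos).symm
    refine ⟨?_, ?_, hpos, hlog⟩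
    · rw [hexp]; exact Real.exp_le_exp.mpr (abs_le.mp hlog).1
    · rw [hexp]; exact Real.exp_le_exp.mpr (abs_le.mp hlog).2
  -- integrability
  have hℓint_μ : Integrable ℓ μ :=
    aux_integrable hℓm.aestronglyMeasurable
      (by filter_upwards [hae] with x hx using hx.2.2.2)
  have hℓint_ν : Integrable ℓ ν :=
    aux_integrable hℓm.aestronglyMeasurable
      (by filter_upwards [hνμ.ae_le hae] with x hx using hx.2.2.2)
  have hρint : Integrable ρ μ :=
    aux_integrable hρm.aestronglyMeasurable
      (by filter_upwards [hae] with x hx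
          rw [abs_of_nonneg hx.2.2.1.le]; exact hx.2.1)
  have hρℓ_int : Integrable (fun x => ρ x * ℓ x) μ :=
    aux_integrable (hρm.mul hℓm).aestronglyMeasurable (K := Real.exp C * C)
      (by filter_upwards [hae] with x hx
          rw [abs_mul, abs_of_nonneg hx.2.2.1.le]
          exact mul_le_mul hx.2.1 hx.2.2.2 (abs_nonneg _) (Real.exp_pos C).le)
  have hρ1ℓ_int : Integrable (fun x => (ρ x - 1) * ℓ x) μ :=
    aux_integrable ((hρm.sub measurable_const).mul hℓm).aestronglyMeasurable
      (K := (Real.exp C + 1) * C)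
      (by filter_upwards [hae] with x hx
          rw [abs_mul]
          refine mul_le_mul ?_ hx.2.2.2 (abs_nonneg _) (by positivity)
          rw [abs_sub_comm]
          calc |1 - ρ x| ≤ |(1:ℝ)| + |ρ x| := abs_sub _ _
          _ ≤ Real.exp C + 1 := by
              rw [abs_of_nonneg hx.2.2.1.le, abs_one]; linarith [hx.2.1])
  -- KL identities
  have h1 : klDivR ν μ = ∫ x, ρ x * ℓ x ∂μ := by
    have h := MeasureTheory.integral_rnDeriv_smul (μ := ν) (ν := μ) hνμ (f := ℓ)
    simp only [smul_eq_mul] at h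
    exact h.symm
  have h2 : klDivR μ ν = ∫ x, -ℓ x ∂μ := by
    refine integral_congr_ae ?_
    filter_upwards [Measure.inv_rnDeriv hμν] with x hx
    have hxx : μ.rnDeriv ν x = ((ν.rnDeriv μ) x)⁻¹ := by
      rw [← hx]; simp
    rw [hxx, ENNReal.toReal_inv, Real.log_inv]
  have hKL : klDivR ν μ + klDivR μ ν = ∫ x, (ρ x - 1) * ℓ x ∂μ := by
    have hs := integral_sub hρℓ_int hℓint_μ
    rw [h1, h2, integral_neg, ← sub_eq_add_neg, ← hs]
    exact integral_congr_ae (Filter.Eventually.of_forall fun x => by ring)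
  constructor
  · -- Part 1: Pinsker
    set D := ∫ x, |ρ x - 1| ∂μ with hDdef
    have hρ1 : ∫ x, ρ x ∂μ = 1 := by
      have := Measure.integral_toReal_rnDeriv hνμ
      simpa using this
    have hρ1int : Integrable (fun x => ρ x - 1) μ := hρint.sub (integrable_const 1)
    have habs_int : Integrable (fun x => |ρ x - 1|) μ := hρ1int.abs
    have hmean0 : ∫ x, (ρ x - 1) ∂μ = 0 := by
      rw [integral_sub hρint (integrable_const 1), hρ1]
      simp
    have htv : tvDist ν μ ≤ D / 2 := by
      haveI : Nonempty {A : Set Ω // MeasurableSet A} := ⟨⟨∅, MeasurableSet.empty⟩⟩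
      refine ciSup_le fun A => ?_
      obtain ⟨A, hA⟩ := A
      have hνA : (ν A).toReal = ∫ x in A, ρ x ∂μ :=
        (Measure.setIntegral_toReal_rnDeriv hνμ A).symm
      have hμA : (μ A).toReal = ∫ x in A, (1:ℝ) ∂μ := by
        rw [setIntegral_const]; simp; rfl
      have hdiff : (ν A).toReal - (μ A).toReal = ∫ x in A, (ρ x - 1) ∂μ := by
        rw [hνA, hμA, ← integral_sub hρint.restrict (integrable_const 1)]
      have hcompl : ∫ x in A, (ρ x - 1) ∂μ + ∫ x in Aᶜ, (ρ x - 1) ∂μ = 0 := by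
        rw [integral_add_compl hA hρ1int, hmean0]
      have hb1 : |∫ x in A, (ρ x - 1) ∂μ| ≤ ∫ x in A, |ρ x - 1| ∂μ := by
        simpa [Real.norm_eq_abs] using
          norm_integral_le_integral_norm (μ := μ.restrict A) fun x => ρ x - 1
      have hb2 : |∫ x in Aᶜ, (ρ x - 1) ∂μ| ≤ ∫ x in Aᶜ, |ρ x - 1| ∂μ := by
        simpa [Real.norm_eq_abs] using
          norm_integral_le_integral_norm (μ := μ.restrict Aᶜ) fun x => ρ x - 1
      have hsum : ∫ x in A, |ρ x - 1| ∂μ + ∫ x in Aᶜ, |ρ x - 1| ∂μ = D :=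
        integral_add_compl hA habs_int
      have heqabs : |∫ x in A, (ρ x - 1) ∂μ| = |∫ x in Aᶜ, (ρ x - 1) ∂μ| := by
        rw [show (∫ x in A, (ρ x - 1) ∂μ) = -∫ x in Aᶜ, (ρ x - 1) ∂μ by linarith, abs_neg]
      rw [hdiff]
      linarith [hb1, hb2]
    have hD0 : 0 ≤ D := integral_nonneg fun x => abs_nonneg _
    have htv0 : 0 ≤ tvDist ν μ := Real.iSup_nonneg fun A => abs_nonneg _
    have hD2 : D ^ 2 ≤ ∫ x, (ρ x - 1) * ℓ x ∂μ := by
      set u : Ω → ℝ := fun x => |ρ x - 1| * Real.sqrt (2 / (ρ x + 1)) with hudef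
      set v : Ω → ℝ := fun x => Real.sqrt ((ρ x + 1) / 2) with hvdef
      have hum : Measurable u :=
        (hρm.sub measurable_const).abs.mul
          ((measurable_const.div (hρm.add measurable_const)).sqrt)
      have hvm : Measurable v := ((hρm.add measurable_const).div measurable_const).sqrt
      have haeuv : ∀ᵐ x ∂μ, u x * v x = |ρ x - 1| ∧ v x ^ 2 = (ρ x + 1) / 2 ∧
          u x ^ 2 = 2 * (ρ x - 1) ^ 2 / (ρ x + 1) ∧ ρ x ≤ Real.exp C ∧ 0 < ρ x := by
        filter_upwards [hae] with x hx
        have hρp : 0 < ρ x := hx.2.2.1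
        have hp1 : (0:ℝ) < ρ x + 1 := by linarith
        have hdiv : (0:ℝ) ≤ 2 / (ρ x + 1) := by positivity
        constructor
        · show |ρ x - 1| * Real.sqrt (2 / (ρ x + 1)) * Real.sqrt ((ρ x + 1) / 2) = |ρ x - 1|
          rw [mul_assoc, ← Real.sqrt_mul hdiv]
          have h9 : 2 / (ρ x + 1) * ((ρ x + 1) / 2) = 1 := by field_simp
          rw [h9, Real.sqrt_one, mul_one]
        refine ⟨Real.sq_sqrt (by positivity), ?_, hx.2.1, hρp⟩
        show (|ρ x - 1| * Real.sqrt (2 / (ρ x + 1))) ^ 2 = _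
        rw [mul_pow, sq_abs, Real.sq_sqrt hdiv]
        ring
      have hkey : ∀ᵐ x ∂μ, u x ^ 2 ≤ (ρ x - 1) * ℓ x := by
        filter_upwards [haeuv] with x hx
        rw [hx.2.2.1]
        exact aux_key (ρ x) hx.2.2.2.2
      have hu2int : Integrable (fun x => u x ^ 2) μ := by
        refine aux_integrable (hum.pow_const 2).aestronglyMeasurable
          (K := 2 * (Real.exp C + 1) ^ 2) ?_
        filter_upwards [haeuv] with x hx
        have hρp : 0 < ρ x := hx.2.2.2.2
        rw [abs_of_nonneg (sq_nonneg _), hx.2.2.1]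
        have h1 : (ρ x - 1) ^ 2 ≤ (Real.exp C + 1) ^ 2 := by nlinarith [hx.2.2.2.1]
        have h2 : 2 * (ρ x - 1) ^ 2 / (ρ x + 1) ≤ 2 * (ρ x - 1) ^ 2 :=
          div_le_self (by positivity) (by linarith)
        linarith
      have hv2int : Integrable (fun x => v x ^ 2) μ := by
        refine aux_integrable (hvm.pow_const 2).aestronglyMeasurable
          (K := (Real.exp C + 1) / 2) ?_
        filter_upwards [haeuv] with x hx
        rw [abs_of_nonneg (sq_nonneg _), hx.2.1]
        linarith [hx.2.2.2.1]
      have huvint : Integrable (fun x => u x * v x) μ := by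
        refine aux_integrable (hum.mul hvm).aestronglyMeasurable
          (K := Real.exp C + 1) ?_
        filter_upwards [haeuv] with x hx
        rw [hx.1, abs_abs, abs_sub_comm]
        calc |1 - ρ x| ≤ |(1:ℝ)| + |ρ x| := abs_sub _ _
        _ ≤ Real.exp C + 1 := by
            rw [abs_of_nonneg hx.2.2.2.2.le, abs_one]; linarith [hx.2.2.2.1]
      have hIv : ∫ x, v x ^ 2 ∂μ = 1 := by
        have he : ∫ x, v x ^ 2 ∂μ = ∫ x, ((1:ℝ)/2 * ρ x + 1/2) ∂μ := by
          refine integral_congr_ae ?_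
          filter_upwards [haeuv] with x hx
          rw [hx.2.1]; ring
        rw [he, integral_add (hρint.const_mul _) (integrable_const _),
          integral_const_mul, hρ1]
        simp
        norm_num
      have hIuv : ∫ x, u x * v x ∂μ = D :=
        integral_congr_ae (by filter_upwards [haeuv] with x hx using hx.1)
      have hIu2le : ∫ x, u x ^ 2 ∂μ ≤ ∫ x, (ρ x - 1) * ℓ x ∂μ :=
        integral_mono_ae hu2int hρ1ℓ_int hkey
      have hcs := aux_cs hu2int hv2int huvint
      rw [hIuv, hIv, mul_one] at hcs
      exact hcs.trans hIu2le
    have h2tv : 2 * tvDist ν μ ≤ D := by linarith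
    have hsq : (2 * tvDist ν μ) ^ 2 ≤ D ^ 2 := by
      have h0 : 0 ≤ 2 * tvDist ν μ := by linarith
      exact pow_le_pow_left₀ h0 h2tv 2
    rw [hKL]
    nlinarith [hD2, hsq]
  · -- Part 2: discriminator decomposition
    set g : Ω → ℝ := fun x => ℓ x - f x with hgdef
    have hgm : Measurable g := hℓm.sub hfm
    have hgbd : ∀ᵐ x ∂μ, |g x| ≤ C + Bf := by
      filter_upwards [hae] with x hx
      calc |ℓ x - f x| ≤ |ℓ x| + |f x| := abs_sub _ _
      _ ≤ C + Bf := add_le_add hx.2.2.2 (hfb x)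
    have hbdd : Filter.IsBoundedUnder (· ≤ ·) (ae μ) fun x => |g x| :=
      ⟨C + Bf, Filter.eventually_map.2 hgbd⟩
    set E := essSup (fun x => |g x|) μ with hEdef
    have hEle : ∀ᵐ x ∂μ, |g x| ≤ E := ae_le_essSup hbdd
    have hgint_μ : Integrable g μ := aux_integrable hgm.aestronglyMeasurable hgbd
    have hgint_ν : Integrable g ν :=
      aux_integrable hgm.aestronglyMeasurable (hνμ.ae_le hgbd)
    have hfint_μ : Integrable f μ :=
      aux_integrable hfm.aestronglyMeasurable (Filter.Eventually.of_forall hfb)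
    have hfint_ν : Integrable f ν :=
      aux_integrable hfm.aestronglyMeasurable (Filter.Eventually.of_forall hfb)
    have hsplitν : ∫ x, ℓ x ∂ν = ∫ x, g x ∂ν + ∫ x, f x ∂ν := by
      rw [← integral_add hgint_ν hfint_ν]
      exact integral_congr_ae (Filter.Eventually.of_forall fun x => by simp [hgdef])
    have hsplitμ : ∫ x, ℓ x ∂μ = ∫ x, g x ∂μ + ∫ x, f x ∂μ := by
      rw [← integral_add hgint_μ hfint_μ]
      exact integral_congr_ae (Filter.Eventually.of_forall fun x => by simp [hgdef])
    have hgν_le : ∫ x, g x ∂ν ≤ E := by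
      have h : ∀ᵐ x ∂ν, |g x| ≤ E := hνμ.ae_le hEle
      have h2' : ∫ x, g x ∂ν ≤ ∫ (_ : Ω), E ∂ν :=
        integral_mono_ae hgint_ν (integrable_const E)
          (h.mono fun x hx => (le_abs_self _).trans hx)
      simpa using h2'
    have hgμ_ge : -E ≤ ∫ x, g x ∂μ := by
      have h2' : ∫ (_ : Ω), -E ∂μ ≤ ∫ x, g x ∂μ :=
        integral_mono_ae (integrable_const (-E)) hgint_μ
          (hEle.mono fun x hx => by
            show -E ≤ g x
            have := neg_abs_le (g x); linarith)
      simpa using h2'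
    have hKL2 : klDivR ν μ + klDivR μ ν = ∫ x, ℓ x ∂ν - ∫ x, ℓ x ∂μ := by
      have hklν : klDivR ν μ = ∫ x, ℓ x ∂ν := rfl
      rw [hklν, h2, integral_neg]
      ring
    rw [hKL2, hsplitν, hsplitμ]
    linarith
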